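/- Suppose V(t,x,p) = x·p + v0(t) + x·v1(t) + x²·v2(t), where v0, v1, v2 are differentiable on [0,T] and satisfy: v2' + (1/κ)v2² - φ = 0, v1' + (1/κ)v2·v1 + Ī(t) = 0, v0' + (1/(4κ))v1² = 0, with v0(T) = 0, v1(T) = 0, v2(T) = -ϱ. Then V satisfies the HJB equation ∂_t V + Ī(t)·∂_p V + (σ_P²/2)·∂_pp V - φx² + sup_{r∈ℝ} { -r·∂_x V + p·r - κ·r² } = 0 for all (t,x,p) ∈ [0,T)×ℝ×ℝ, with terminal condition V(T,x,p) = x(p - ϱx). -/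

import Mathlib

lemma sup_quad (κ a p : ℝ) (hκ : 0 < κ) :
    sSup (Set.range fun r : ℝ => -r * a + p * r - κ * r ^ 2) = (p - a) ^ 2 / (4 * κ) := by
  apply IsGreatest.csSup_eq
  constructor
  · exact ⟨(p - a) / (2 * κ), by field_simp; ring⟩
  · rintro y ⟨r, rfl⟩
    simp only
    rw [le_div_iff₀ (by positivity)]
    nlinarith [sq_nonneg (p - a - 2 * κ * r)]

theorem stmt4 (κ φ σP ϱ T : ℝ) (hκ : 0 < κ) (hφ : 0 < φ) (hσ : 0 < σP)
    (hϱ : 0 < ϱ) (hT : 0 < T)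
    (Ibar : ℝ → ℝ) (hI : ContinuousOn Ibar (Set.Icc 0 T))
    (v0 v1 v2 v0' v1' v2' : ℝ → ℝ)
    (hv0 : ∀ t ∈ Set.Icc (0:ℝ) T, HasDerivAt v0 (v0' t) t)
    (hv1 : ∀ t ∈ Set.Icc (0:ℝ) T, HasDerivAt v1 (v1' t) t)
    (hv2 : ∀ t ∈ Set.Icc (0:ℝ) T, HasDerivAt v2 (v2' t) t)
    (hR : ∀ t ∈ Set.Icc (0:ℝ) T, v2' t + (1 / κ) * (v2 t) ^ 2 - φ = 0)
    (hL : ∀ t ∈ Set.Icc (0:ℝ) T, v1' t + (1 / κ) * v2 t * v1 t + Ibar t = 0)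
    (h0 : ∀ t ∈ Set.Icc (0:ℝ) T, v0' t + (1 / (4 * κ)) * (v1 t) ^ 2 = 0)
    (hT0 : v0 T = 0) (hT1 : v1 T = 0) (hT2 : v2 T = -ϱ)
    (V : ℝ → ℝ → ℝ → ℝ)
    (hV : ∀ t x p, V t x p = x * p + v0 t + x * v1 t + x ^ 2 * v2 t) :
    (∀ t ∈ Set.Ico (0:ℝ) T, ∀ x p : ℝ,
      deriv (fun τ => V τ x p) t
        + Ibar t * deriv (fun q => V t x q) p
        + (σP ^ 2 / 2) * deriv (deriv (fun q => V t x q)) p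
        - φ * x ^ 2
        + sSup (Set.range fun r : ℝ =>
            -r * deriv (fun y => V t y p) x + p * r - κ * r ^ 2) = 0) ∧
    ∀ x p : ℝ, V T x p = x * (p - ϱ * x) := by
  constructor
  · intro t ht x p
    have htI : t ∈ Set.Icc (0:ℝ) T := ⟨ht.1, ht.2.le⟩
    have hdt : deriv (fun τ => V τ x p) t = v0' t + x * v1' t + x ^ 2 * v2' t := by
      have : HasDerivAt (fun τ => x * p + v0 τ + x * v1 τ + x ^ 2 * v2 τ)
          (v0' t + x * v1' t + x ^ 2 * v2' t) t := by
        have h1 := ((hv0 t htI).const_add (x * p)).add ((hv1 t htI).const_mul x)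
        have := h1.add ((hv2 t htI).const_mul (x ^ 2))
        simpa [Pi.add_def] using this
      simp only [hV]
      exact this.deriv
    have hdq : ∀ q : ℝ, deriv (fun q => V t x q) q = x := by
      intro q
      have : HasDerivAt (fun q : ℝ => x * q + v0 t + x * v1 t + x ^ 2 * v2 t) x q := by
        have h := ((hasDerivAt_id q).const_mul x).add_const (v0 t + x * v1 t + x ^ 2 * v2 t)
        have he : (fun q : ℝ => x * q + v0 t + x * v1 t + x ^ 2 * v2 t)
            = fun q : ℝ => x * id q + (v0 t + x * v1 t + x ^ 2 * v2 t) := by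
          funext q; simp; ring
        rw [he]; simpa using h
      simp only [hV]
      simpa using (by simpa [add_assoc] using this.deriv)
    have hdq2 : deriv (deriv (fun q => V t x q)) p = 0 := by
      have : deriv (fun q => V t x q) = fun _ => x := funext hdq
      rw [this, deriv_const]
    have hdx : deriv (fun y => V t y p) x = p + v1 t + 2 * x * v2 t := by
      have : HasDerivAt (fun y => y * p + v0 t + y * v1 t + y ^ 2 * v2 t)
          (p + v1 t + 2 * x * v2 t) x := by
        have h1 := (((hasDerivAt_id x).mul_const p).add_const (v0 t)).add
          ((hasDerivAt_id x).mul_const (v1 t))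
        have h2 := h1.add ((hasDerivAt_pow 2 x).mul_const (v2 t))
        simpa [Pi.add_def, mul_comm, mul_assoc, mul_left_comm] using h2
      simp only [hV]
      exact this.deriv
    rw [hdt, hdq p, hdq2, hdx, sup_quad κ _ p hκ]
    have e0 := h0 t htI
    have e1 := hL t htI
    have e2 := hR t htI
    have hκ' : κ ≠ 0 := hκ.ne'
    linear_combination e0 + x * e1 + x ^ 2 * e2
  · intro x p
    rw [hV, hT0, hT1, hT2]; ring
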